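/- Let σ be an assemblage with steerable weight S_W(σ) and let σ_{a|x} = [1 − S_W(σ)] σ^{US}_{a|x} + S_W(σ) σ^S_{a|x} be an optimal decomposition, where σ^{US} is an unsteerable assemblage and σ^S is an assemblage. Then S_O(σ) ≤ S_W(σ) · S_O(σ^S) ≤ S_O(σ) + 2[1 − S_W(σ)], where S_O denotes the optimal steering fraction. -/

import Mathlib

open scoped ComplexOrder Kronecker Matrix
open MeasureTheory

noncomputable section

namespace QSteer

/-- Square complex matrices indexed by `ι` (the Hilbert space `ℂ^ι`). -/
abbrev HMat (ι : Type) : Type := Matrix ι ι ℂ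

/-- A density matrix: positive semidefinite with unit trace. -/
def IsDensity {ι : Type} [Fintype ι] (ρ : HMat ι) : Prop :=
  ρ.PosSemidef ∧ ρ.trace = 1

/-- A POVM family `{E_{a|x}}`: positive semidefinite effects summing to the identity
for every setting `x`. -/
def IsPOVM {ι A X : Type} [Fintype ι] [Fintype A] [DecidableEq ι]
    (E : A → X → HMat ι) : Prop :=
  (∀ a x, (E a x).PosSemidef) ∧ ∀ x, ∑ a, E a x = 1

/-- A projective measurement family: a POVM family whose effects are orthogonal
projections. -/
def IsProjPOVM {ι A X : Type} [Fintype ι] [Fintype A] [DecidableEq ι]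
    (E : A → X → HMat ι) : Prop :=
  IsPOVM E ∧ ∀ a x, (E a x).IsHermitian ∧ E a x * E a x = E a x

/-- An assemblage `{σ_{a|x}}`: positive semidefinite matrices such that `∑_a σ_{a|x}`
is the same unit-trace matrix for every `x`. -/
def IsAssemblage {ι A X : Type} [Fintype ι] [Fintype A] (σ : A → X → HMat ι) : Prop :=
  (∀ a x, (σ a x).PosSemidef) ∧ (∀ x x', ∑ a, σ a x = ∑ a, σ a x') ∧
    ∀ x, (∑ a, σ a x).trace = 1

/-- An unsteerable assemblage: one admitting a local-hidden-state model. -/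
def IsUnsteerable {ι A X : Type} [Fintype ι] [Fintype A] (σ : A → X → HMat ι) : Prop :=
  ∃ (n : ℕ) (w : Fin n → ℝ) (p : A → X → Fin n → ℝ) (τ : Fin n → HMat ι),
    (∀ l, 0 ≤ w l) ∧ (∑ l, w l = 1) ∧
    (∀ a x l, 0 ≤ p a x l) ∧ (∀ x l, ∑ a, p a x l = 1) ∧
    (∀ l, IsDensity (τ l)) ∧
    ∀ a x, σ a x = ∑ l, (w l * p a x l) • τ l

/-- A steering functional `{F_{a|x}}`: a family of positive semidefinite matrices. -/
def IsSteeringFunctional {ι A X : Type} [Fintype ι] (F : A → X → HMat ι) : Prop :=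
  ∀ a x, (F a x).PosSemidef

/-- The value `∑_{a,x} tr(F_{a|x} σ_{a|x})` (real part). -/
def steeringValue {ι A X : Type} [Fintype ι] [Fintype A] [Fintype X]
    (F σ : A → X → HMat ι) : ℝ :=
  ∑ x, ∑ a, ((F a x * σ a x).trace).re

/-- The steering bound `ω_s(F)`. -/
def steeringBound {ι A X : Type} [Fintype ι] [Fintype A] [Fintype X]
    (F : A → X → HMat ι) : ℝ :=
  sSup {r : ℝ | ∃ σ : A → X → HMat ι, IsAssemblage σ ∧ IsUnsteerable σ ∧
    r = steeringValue F σ}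

/-- The steering fraction `Γ_s(σ, F)`. -/
def steeringFraction {ι A X : Type} [Fintype ι] [Fintype A] [Fintype X]
    (σ F : A → X → HMat ι) : ℝ :=
  steeringValue F σ / steeringBound F

/-- Partial trace over the first (Alice's) tensor factor. -/
def ptraceA {ιA ιB : Type} [Fintype ιA] (M : Matrix (ιA × ιB) (ιA × ιB) ℂ) : HMat ιB :=
  Matrix.of fun j j' => ∑ i, M (i, j) (i, j')

/-- The assemblage induced by a bipartite state and Alice's POVMs:
`σ_{a|x} = Tr_A[ρ (E_{a|x} ⊗ I)]`. -/
def inducedAssemblage {ιA ιB A X : Type} [Fintype ιA] [Fintype ιB] [DecidableEq ιB]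
    (ρ : Matrix (ιA × ιB) (ιA × ιB) ℂ) (E : A → X → HMat ιA) : A → X → HMat ιB :=
  fun a x => ptraceA (ρ * ((E a x) ⊗ₖ (1 : HMat ιB)))

/-- Largest steering-inequality violation `LV_s(ρ, F)` over Alice POVM families. -/
def LVs {ιA ιB A X : Type} [Fintype ιA] [Fintype ιB] [DecidableEq ιA] [DecidableEq ιB]
    [Fintype A] [Fintype X]
    (ρ : Matrix (ιA × ιB) (ιA × ιB) ℂ) (F : A → X → HMat ιB) : ℝ :=
  sSup {r : ℝ | ∃ E : A → X → HMat ιA, IsPOVM E ∧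
    r = steeringFraction (inducedAssemblage ρ E) F}

/-- Largest steering-inequality violation `LV_s^π(ρ, F)` over projective Alice families. -/
def LVsProj {ιA ιB A X : Type} [Fintype ιA] [Fintype ιB] [DecidableEq ιA] [DecidableEq ιB]
    [Fintype A] [Fintype X]
    (ρ : Matrix (ιA × ιB) (ιA × ιB) ℂ) (F : A → X → HMat ιB) : ℝ :=
  sSup {r : ℝ | ∃ E : A → X → HMat ιA, IsProjPOVM E ∧
    r = steeringFraction (inducedAssemblage ρ E) F}

/-- The maximally entangled state `|Ψ⁺⟩⟨Ψ⁺|` on `ℂ^ι ⊗ ℂ^ι`. -/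
def maxEnt (ι : Type) [Fintype ι] [DecidableEq ι] : Matrix (ι × ι) (ι × ι) ℂ :=
  Matrix.of fun pq rs => if pq.1 = pq.2 ∧ rs.1 = rs.2 then ((Fintype.card ι : ℂ))⁻¹ else 0

/-- The fully entangled fraction `F(ρ) = sup_U ⟨Ψ⁺|(U ⊗ I) ρ (U ⊗ I)†|Ψ⁺⟩`. -/
def fef {ι : Type} [Fintype ι] [DecidableEq ι] (ρ : Matrix (ι × ι) (ι × ι) ℂ) : ℝ :=
  sSup {r : ℝ | ∃ U : Matrix ι ι ℂ, U ∈ Matrix.unitaryGroup ι ℂ ∧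
    r = ((maxEnt ι * ((U ⊗ₖ (1 : HMat ι)) * ρ * ((U ⊗ₖ (1 : HMat ι))ᴴ))).trace).re}

/-- A local-hidden-variable (Bell-local) correlation. -/
def IsLHV {A B X Y : Type} [Fintype A] [Fintype B] (P : A → B → X → Y → ℝ) : Prop :=
  ∃ (n : ℕ) (w : Fin n → ℝ) (pA : A → X → Fin n → ℝ) (pB : B → Y → Fin n → ℝ),
    (∀ l, 0 ≤ w l) ∧ (∑ l, w l = 1) ∧
    (∀ a x l, 0 ≤ pA a x l) ∧ (∀ x l, ∑ a, pA a x l = 1) ∧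
    (∀ b y l, 0 ≤ pB b y l) ∧ (∀ y l, ∑ b, pB b y l = 1) ∧
    ∀ a b x y, P a b x y = ∑ l, w l * pA a x l * pB b y l

/-- The Bell value `∑ B_{ab|xy} P(a,b|x,y)`. -/
def bellValue {A B X Y : Type} [Fintype A] [Fintype B] [Fintype X] [Fintype Y]
    (Bf P : A → B → X → Y → ℝ) : ℝ :=
  ∑ x, ∑ y, ∑ a, ∑ b, Bf a b x y * P a b x y

/-- The local bound `ω(B)`. -/
def localBound {A B X Y : Type} [Fintype A] [Fintype B] [Fintype X] [Fintype Y]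
    (Bf : A → B → X → Y → ℝ) : ℝ :=
  sSup {r : ℝ | ∃ P : A → B → X → Y → ℝ, IsLHV P ∧ r = bellValue Bf P}

/-- The nonlocality fraction `Γ(P, B)`. -/
def nonlocalityFraction {A B X Y : Type} [Fintype A] [Fintype B] [Fintype X] [Fintype Y]
    (P Bf : A → B → X → Y → ℝ) : ℝ :=
  bellValue Bf P / localBound Bf

/-- The quantum correlation `P(a,b|x,y) = tr[ρ (E_{a|x} ⊗ E_{b|y})]`. -/
def quantumCorr {ιA ιB A B X Y : Type} [Fintype ιA] [Fintype ιB]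
    (ρ : Matrix (ιA × ιB) (ιA × ιB) ℂ) (EA : A → X → HMat ιA) (EB : B → Y → HMat ιB) :
    A → B → X → Y → ℝ :=
  fun a b x y => ((ρ * ((EA a x) ⊗ₖ (EB b y))).trace).re

/-- Largest Bell-inequality violation `LV(ρ, B)` over pairs of POVM families. -/
def LV {ιA ιB A B X Y : Type} [Fintype ιA] [Fintype ιB] [DecidableEq ιA] [DecidableEq ιB]
    [Fintype A] [Fintype B] [Fintype X] [Fintype Y]
    (ρ : Matrix (ιA × ιB) (ιA × ιB) ℂ) (Bf : A → B → X → Y → ℝ) : ℝ :=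
  sSup {r : ℝ | ∃ (EA : A → X → HMat ιA) (EB : B → Y → HMat ιB),
    IsPOVM EA ∧ IsPOVM EB ∧ r = nonlocalityFraction (quantumCorr ρ EA EB) Bf}

/-- Largest Bell-inequality violation `LV^π(ρ, B)` over pairs of projective families. -/
def LVProj {ιA ιB A B X Y : Type} [Fintype ιA] [Fintype ιB] [DecidableEq ιA] [DecidableEq ιB]
    [Fintype A] [Fintype B] [Fintype X] [Fintype Y]
    (ρ : Matrix (ιA × ιB) (ιA × ιB) ℂ) (Bf : A → B → X → Y → ℝ) : ℝ :=
  sSup {r : ℝ | ∃ (EA : A → X → HMat ιA) (EB : B → Y → HMat ιB),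
    IsProjPOVM EA ∧ IsProjPOVM EB ∧ r = nonlocalityFraction (quantumCorr ρ EA EB) Bf}

/-- The steering functional induced by a Bell functional and Bob's POVMs:
`F_{a|x} = ∑_{b,y} B_{ab|xy} E_{b|y}`. -/
def inducedF {ιB A B X Y : Type} [Fintype B] [Fintype Y]
    (Bf : A → B → X → Y → ℝ) (EB : B → Y → HMat ιB) : A → X → HMat ιB :=
  fun a x => ∑ y, ∑ b, Bf a b x y • EB b y

/-- The `k`-fold tensor power of a bipartite state, regrouped as a bipartite state on
`ℂ^{d^k} ⊗ ℂ^{d^k}` (Alice's factors grouped together, likewise Bob's). -/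
def tensorPower {ι : Type} (ρ : Matrix (ι × ι) (ι × ι) ℂ) (k : ℕ) :
    Matrix ((Fin k → ι) × (Fin k → ι)) ((Fin k → ι) × (Fin k → ι)) ℂ :=
  Matrix.of fun p q => ∏ t, ρ (p.1 t, p.2 t) (q.1 t, q.2 t)

/-- The isotropic state `ρ_iso(p) = p |Ψ⁺⟩⟨Ψ⁺| + (1-p) I/d²` on `ℂ^d ⊗ ℂ^d`. -/
def iso (d : ℕ) (p : ℝ) : Matrix (Fin d × Fin d) (Fin d × Fin d) ℂ :=
  p • maxEnt (Fin d) + ((1 - p) / (d : ℝ) ^ 2) • (1 : Matrix (Fin d × Fin d) (Fin d × Fin d) ℂ)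

/-- `sup_F Γ_s(σ, F)` over positive semidefinite steering functionals with positive
steering bound. -/
def supFrac {ι A X : Type} [Fintype ι] [Fintype A] [Fintype X] (σ : A → X → HMat ι) : ℝ :=
  sSup {r : ℝ | ∃ F : A → X → HMat ι, IsSteeringFunctional F ∧ 0 < steeringBound F ∧
    r = steeringFraction σ F}

/-- The optimal steering fraction `S_O(σ) = max{0, sup_F Γ_s(σ, F) − 1}`. -/
def SO {ι A X : Type} [Fintype ι] [Fintype A] [Fintype X] (σ : A → X → HMat ι) : ℝ :=
  max 0 (supFrac σ - 1)

/-- The steerable weight `S_W(σ)`. -/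
def SW {ι A X : Type} [Fintype ι] [Fintype A] [Fintype X] (σ : A → X → HMat ι) : ℝ :=
  sInf {ν : ℝ | 0 ≤ ν ∧ ν ≤ 1 ∧ ∃ σUS σS : A → X → HMat ι,
    IsAssemblage σUS ∧ IsUnsteerable σUS ∧ IsAssemblage σS ∧
    ∀ a x, σ a x = (1 - ν) • σUS a x + ν • σS a x}

/-- The steering robustness `S_R(σ)`. -/
def SR {ι A X : Type} [Fintype ι] [Fintype A] [Fintype X] (σ : A → X → HMat ι) : ℝ :=
  sInf {ν : ℝ | 0 ≤ ν ∧ ∃ τ : A → X → HMat ι, IsAssemblage τ ∧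
    IsUnsteerable (fun a x => (1 / (1 + ν)) • σ a x + (ν / (1 + ν)) • τ a x)}

/-- Separability of a bipartite state. -/
def IsSeparable {ιA ιB : Type} [Fintype ιA] [Fintype ιB]
    (ρ : Matrix (ιA × ιB) (ιA × ιB) ℂ) : Prop :=
  ∃ (n : ℕ) (w : Fin n → ℝ) (ρA : Fin n → HMat ιA) (ρB : Fin n → HMat ιB),
    (∀ l, 0 ≤ w l) ∧ (∑ l, w l = 1) ∧ (∀ l, IsDensity (ρA l)) ∧ (∀ l, IsDensity (ρB l)) ∧
    ρ = ∑ l, w l • ((ρA l) ⊗ₖ (ρB l))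

/-- The (unnormalized) output assemblage of a one-way LOCC subchannel acting on an
assemblage: `M(σ)_{a'|x'} = K (∑_{a,x} P(x|x') P(a'|x',a,x) σ_{a|x}) K†`. -/
def wired {ι ι₂ A X A' X' : Type} [Fintype ι] [Fintype A] [Fintype X]
    (K : Matrix ι₂ ι ℂ) (Px : X → X' → ℝ) (Pa : A' → X' → A → X → ℝ)
    (σ : A → X → HMat ι) : A' → X' → HMat ι₂ :=
  fun a' x' => K * (∑ x, ∑ a, (Px x x' * Pa a' x' a x) • σ a x) * Kᴴ

instance matMeasurableSpace {m n : Type} : MeasurableSpace (Matrix m n ℂ) :=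
  inferInstanceAs (MeasurableSpace (m → n → ℂ))

/-- The `(U ⊗ U*)`-twirl of a bipartite state with respect to a measure `μ` on the
unitary group (entrywise Bochner integral). -/
def twirl {ι : Type} [Fintype ι] [DecidableEq ι]
    (μ : Measure (Matrix.unitaryGroup ι ℂ)) (ρ : Matrix (ι × ι) (ι × ι) ℂ) :
    Matrix (ι × ι) (ι × ι) ℂ :=
  Matrix.of fun p q =>
    ∫ V : Matrix.unitaryGroup ι ℂ,
      ((((V : Matrix ι ι ℂ)) ⊗ₖ ((V : Matrix ι ι ℂ).map (starRingEnd ℂ))) * ρ *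
        ((((V : Matrix ι ι ℂ)) ⊗ₖ ((V : Matrix ι ι ℂ).map (starRingEnd ℂ)))ᴴ)) p q ∂μ



section AuxProof

open Matrix in
lemma psd_trace_re_nonneg {n : Type} [Fintype n] {M : Matrix n n ℂ} (hM : M.PosSemidef) :
    0 ≤ M.trace.re := by
  classical
  have h : ∀ i, 0 ≤ (M i i).re := by
    intro i
    have := hM.re_dotProduct_nonneg (Pi.single i 1)
    simpa [Matrix.mulVec_single, dotProduct, Pi.single_apply, Finset.sum_ite_eq] using this
  simpa [Matrix.trace, Matrix.diag, Complex.re_sum] using Finset.sum_nonneg (fun i _ => h i)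

open Matrix in
lemma trace_mul_re_nonneg {n : Type} [Fintype n] {M N : Matrix n n ℂ}
    (hM : M.PosSemidef) (hN : N.PosSemidef) : 0 ≤ ((M * N).trace).re := by
  classical
  obtain ⟨C, rfl⟩ : ∃ C : Matrix n n ℂ, N = Cᴴ * C := by
    open scoped MatrixOrder in exact CStarAlgebra.nonneg_iff_eq_star_mul_self.mp hN.nonneg
  have h : (M * (Cᴴ * C)).trace = (C * M * Cᴴ).trace := by
    rw [← Matrix.mul_assoc, Matrix.trace_mul_cycle]
  rw [h]
  exact psd_trace_re_nonneg (hM.mul_mul_conjTranspose_same C)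

open Matrix in
lemma trace_mul_re_le {n : Type} [Fintype n] {M N : Matrix n n ℂ}
    (hM : M.PosSemidef) (hN : N.PosSemidef) :
    ((M * N).trace).re ≤ M.trace.re * N.trace.re := by
  classical
  obtain ⟨P, rfl⟩ : ∃ P : Matrix n n ℂ, M = Pᴴ * P := by
    open scoped MatrixOrder in exact CStarAlgebra.nonneg_iff_eq_star_mul_self.mp hM.nonneg
  obtain ⟨Q, rfl⟩ : ∃ Q : Matrix n n ℂ, N = Qᴴ * Q := by
    open scoped MatrixOrder in exact CStarAlgebra.nonneg_iff_eq_star_mul_self.mp hN.nonneg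
  have key : ∀ (R : Matrix n n ℂ), ((Rᴴ * R).trace).re = ∑ j, ∑ i, Complex.normSq (R i j) := by
    intro R
    simp [Matrix.trace, Matrix.diag, Matrix.mul_apply, Matrix.conjTranspose_apply,
      Complex.re_sum, Complex.normSq_apply]
  have h1 : ((Pᴴ * P * (Qᴴ * Q)).trace) = (((P * Qᴴ)ᴴ * (P * Qᴴ)).trace) := by
    rw [Matrix.conjTranspose_mul, Matrix.conjTranspose_conjTranspose]
    rw [Matrix.trace_mul_comm (Pᴴ * P) (Qᴴ * Q)]
    rw [Matrix.mul_assoc, Matrix.mul_assoc, ← Matrix.mul_assoc Q, ← Matrix.mul_assoc Q,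
      Matrix.trace_mul_comm, Matrix.mul_assoc]
  calc ((Pᴴ * P * (Qᴴ * Q)).trace).re = ∑ j, ∑ i, Complex.normSq ((P * Qᴴ) i j) := by
        rw [h1, key]
    _ ≤ ∑ j, ∑ i, (∑ k, Complex.normSq (P i k)) * (∑ k, Complex.normSq (Q j k)) := by
        refine Finset.sum_le_sum fun j _ => Finset.sum_le_sum fun i _ => ?_
        have habs : ‖(P * Qᴴ) i j‖
            ≤ ∑ k, ‖P i k‖ * ‖Q j k‖ := by
          rw [Matrix.mul_apply]
          refine le_trans (norm_sum_le _ _) (le_of_eq ?_)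
          refine Finset.sum_congr rfl fun k _ => ?_
          simp [Matrix.conjTranspose_apply]
        calc Complex.normSq ((P * Qᴴ) i j)
            = ‖(P * Qᴴ) i j‖ ^ 2 := (Complex.sq_norm _).symm
          _ ≤ (∑ k, ‖P i k‖ * ‖Q j k‖) ^ 2 :=
              pow_le_pow_left₀ (norm_nonneg _) habs 2
          _ ≤ (∑ k, ‖P i k‖ ^ 2) * (∑ k, ‖Q j k‖ ^ 2) :=
              Finset.sum_mul_sq_le_sq_mul_sq _ _ _
          _ = (∑ k, Complex.normSq (P i k)) * (∑ k, Complex.normSq (Q j k)) := by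
              simp [Complex.sq_norm]
    _ = (∑ i, ∑ k, Complex.normSq (P i k)) * (∑ j, ∑ k, Complex.normSq (Q j k)) := by
        rw [Finset.sum_comm, ← Finset.sum_mul_sum]
    _ = ((Pᴴ * P).trace).re * ((Qᴴ * Q).trace).re := by
        rw [key, key]; congr 1 <;> exact Finset.sum_comm
  
open Matrix in
lemma psd_smul {n : Type} [Fintype n] {M : Matrix n n ℂ} (hM : M.PosSemidef)
    {c : ℝ} (hc : 0 ≤ c) : (c • M).PosSemidef := by
  constructor
  · rw [Matrix.IsHermitian, Matrix.conjTranspose_smul, star_trivial, hM.1]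
  · intro x
    exact (hM.smul hc).2 x

section SteerAux

variable {ι A X : Type} [Fintype ι] [Fintype A] [Fintype X]

lemma steeringValue_nonneg {F σ : A → X → HMat ι} (hF : IsSteeringFunctional F)
    (hσ : ∀ a x, (σ a x).PosSemidef) : 0 ≤ steeringValue F σ :=
  Finset.sum_nonneg fun x _ => Finset.sum_nonneg fun a _ =>
    trace_mul_re_nonneg (hF a x) (hσ a x)

lemma bddAbove_bound_set (F : A → X → HMat ι) (hF : IsSteeringFunctional F) :
    BddAbove {r : ℝ | ∃ τ : A → X → HMat ι, IsAssemblage τ ∧ IsUnsteerable τ ∧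
      r = steeringValue F τ} := by
  classical
  refine ⟨∑ x, ∑ a, ((F a x).trace).re, ?_⟩
  rintro r ⟨τ, hτ, -, rfl⟩
  refine Finset.sum_le_sum fun x _ => Finset.sum_le_sum fun a _ => ?_
  have htr : ((τ a x).trace).re ≤ 1 := by
    have h1 : ∑ a', ((τ a' x).trace).re = 1 := by
      have := hτ.2.2 x
      rw [Matrix.trace_sum] at this
      rw [← Complex.re_sum]
      rw [this]; simp
    have := Finset.single_le_sum
      (f := fun a' => ((τ a' x).trace).re)
      (fun a' _ => psd_trace_re_nonneg (hτ.1 a' x)) (Finset.mem_univ a)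
    linarith
  calc ((F a x * τ a x).trace).re
      ≤ ((F a x).trace).re * ((τ a x).trace).re := trace_mul_re_le (hF a x) (hτ.1 a x)
    _ ≤ ((F a x).trace).re * 1 :=
        mul_le_mul_of_nonneg_left htr (psd_trace_re_nonneg (hF a x))
    _ = ((F a x).trace).re := mul_one _

lemma val_le_bound {F τ : A → X → HMat ι} (hF : IsSteeringFunctional F)
    (hτ : IsAssemblage τ) (hτu : IsUnsteerable τ) :
    steeringValue F τ ≤ steeringBound F :=
  le_csSup (bddAbove_bound_set F hF) ⟨τ, hτ, hτu, rfl⟩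

lemma bddAbove_frac_set (σ : A → X → HMat ι) (hσ : IsAssemblage σ) [Nonempty X] :
    BddAbove {r : ℝ | ∃ F : A → X → HMat ι, IsSteeringFunctional F ∧
      0 < steeringBound F ∧ r = steeringFraction σ F} := by
  classical
  obtain ⟨x₀⟩ := (inferInstance : Nonempty X)
  have hAne : Nonempty A := by
    by_contra h
    have : IsEmpty A := not_nonempty_iff.mp h
    have h1 := hσ.2.2 x₀
    simp [Finset.univ_eq_empty] at h1
  have hcard : 0 < (Fintype.card A : ℝ) := by
    exact_mod_cast Fintype.card_pos
  set ρ : HMat ι := ∑ a, σ a x₀ with hρ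
  have hρpsd : ρ.PosSemidef := by
    refine Finset.sum_induction _ _ (fun a b ha hb => ha.add hb) Matrix.PosSemidef.zero ?_
    exact fun a _ => hσ.1 a x₀
  have hρtr : ρ.trace = 1 := hσ.2.2 x₀
  set c : ℝ := (Fintype.card A : ℝ)⁻¹ with hc
  have hc0 : 0 ≤ c := inv_nonneg.mpr (le_of_lt hcard)
  set u : A → X → HMat ι := fun _ _ => c • ρ with hu
  have huA : IsAssemblage u := by
    refine ⟨fun a x => psd_smul hρpsd hc0, fun x x' => rfl, fun x => ?_⟩
    rw [Matrix.trace_sum]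
    simp only [hu, Matrix.trace_smul, hρtr]
    rw [Finset.sum_const, Finset.card_univ, hc]
    haveI := hAne
    simp only [nsmul_eq_mul, Complex.real_smul, Complex.ofReal_inv, Complex.ofReal_natCast,
      mul_one]
    rw [mul_inv_cancel₀]
    exact_mod_cast Fintype.card_ne_zero
  have huU : IsUnsteerable u := by
    refine ⟨1, fun _ => 1, fun a x l => c, fun _ => ρ, fun l => zero_le_one, by simp,
      fun a x l => hc0, fun x l => ?_, fun l => ⟨hρpsd, hρtr⟩, fun a x => ?_⟩
    · rw [Finset.sum_const, Finset.card_univ, hc, nsmul_eq_mul]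
      field_simp
    · simp [hu]
  refine ⟨(Fintype.card A : ℝ), ?_⟩
  rintro r ⟨F, hF, hω, rfl⟩
  rw [steeringFraction, div_le_iff₀ hω]
  set T : ℝ := ∑ x, ∑ a, ((F a x * ρ).trace).re with hT
  have hval_le : steeringValue F σ ≤ T := by
    refine Finset.sum_le_sum fun x _ => Finset.sum_le_sum fun a _ => ?_
    have hρx : ρ = ∑ a', σ a' x := hσ.2.1 x₀ x
    rw [hρx, Matrix.mul_sum, Matrix.trace_sum, Complex.re_sum]
    exact Finset.single_le_sum
      (f := fun a' => ((F a x * σ a' x).trace).re)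
      (fun a' _ => trace_mul_re_nonneg (hF a x) (hσ.1 a' x)) (Finset.mem_univ a)
  have hvalu : steeringValue F u = c * T := by
    rw [steeringValue, hT, Finset.mul_sum]
    refine Finset.sum_congr rfl fun x _ => ?_
    rw [Finset.mul_sum]
    refine Finset.sum_congr rfl fun a _ => ?_
    simp [hu, Matrix.mul_smul, Matrix.trace_smul, Complex.smul_re, smul_eq_mul]
  have hub : c * T ≤ steeringBound F := hvalu ▸ val_le_bound hF huA huU
  have hTle : T ≤ (Fintype.card A : ℝ) * steeringBound F := by
    have h1 : (Fintype.card A : ℝ) * (c * T) ≤ (Fintype.card A : ℝ) * steeringBound F :=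
      mul_le_mul_of_nonneg_left hub (le_of_lt hcard)
    have h2 : (Fintype.card A : ℝ) * (c * T) = T := by
      rw [hc, ← mul_assoc]
      field_simp
    linarith
  linarith

lemma steeringValue_decomp {F σ τ υ : A → X → HMat ι} {r s : ℝ}
    (h : ∀ a x, σ a x = r • τ a x + s • υ a x) :
    steeringValue F σ = r * steeringValue F τ + s * steeringValue F υ := by
  rw [steeringValue, steeringValue, steeringValue, Finset.mul_sum, Finset.mul_sum,
    ← Finset.sum_add_distrib]
  refine Finset.sum_congr rfl fun x _ => ?_
  rw [Finset.mul_sum, Finset.mul_sum, ← Finset.sum_add_distrib]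
  refine Finset.sum_congr rfl fun a _ => ?_
  rw [h a x, Matrix.mul_add, Matrix.mul_smul, Matrix.mul_smul, Matrix.trace_add,
    Matrix.trace_smul, Matrix.trace_smul, Complex.add_re, Complex.smul_re, Complex.smul_re]
  simp [smul_eq_mul]

end SteerAux

end AuxProof

/-- Proposition 1: for an optimal steerable-weight decomposition
`σ = (1 − S_W(σ)) σ^US + S_W(σ) σ^S`,
`S_O(σ) ≤ S_W(σ)·S_O(σ^S) ≤ S_O(σ) + 2(1 − S_W(σ))`. -/
theorem stmt13 {ι A X : Type} [Fintype ι] [Fintype A] [Fintype X]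
    (σ σUS σS : A → X → HMat ι)
    (hσ : IsAssemblage σ) (hUS : IsAssemblage σUS) (hUSu : IsUnsteerable σUS)
    (hS : IsAssemblage σS)
    (hdec : ∀ a x, σ a x = (1 - SW σ) • σUS a x + SW σ • σS a x) :
    SO σ ≤ SW σ * SO σS ∧ SW σ * SO σS ≤ SO σ + 2 * (1 - SW σ) := by
  classical
  have hmem1 : (1:ℝ) ∈ {ν : ℝ | 0 ≤ ν ∧ ν ≤ 1 ∧ ∃ σUS' σS' : A → X → HMat ι,
      IsAssemblage σUS' ∧ IsUnsteerable σUS' ∧ IsAssemblage σS' ∧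
      ∀ a x, σ a x = (1 - ν) • σUS' a x + ν • σS' a x} :=
    ⟨zero_le_one, le_refl 1, σUS, σ, hUS, hUSu, hσ, fun a x => by simp⟩
  have hν0 : 0 ≤ SW σ := le_csInf ⟨1, hmem1⟩ (fun b hb => hb.1)
  have hν1 : SW σ ≤ 1 := csInf_le ⟨0, fun b hb => hb.1⟩ hmem1
  have hSOσ : 0 ≤ SO σ := le_max_left _ _
  have hSOσS : 0 ≤ SO σS := le_max_left _ _
  by_cases hX : Nonempty X
  · haveI := hX
    have hbb := bddAbove_frac_set σ hσ
    have hbbS := bddAbove_frac_set σS hS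
    have hfree : ∀ τ : A → X → HMat ι, supFrac τ - 1 ≤ SO τ := fun τ => le_max_right _ _
    -- first inequality
    have h1 : supFrac σ ≤ SW σ * SO σS + 1 := by
      by_cases hne : Set.Nonempty {r : ℝ | ∃ F : A → X → HMat ι, IsSteeringFunctional F ∧
          0 < steeringBound F ∧ r = steeringFraction σ F}
      · rw [supFrac]
        refine csSup_le hne ?_
        rintro r ⟨F, hF, hω, rfl⟩
        have hvUS : steeringValue F σUS ≤ steeringBound F := val_le_bound hF hUS hUSu
        have hΓS : steeringFraction σS F ≤ supFrac σS :=
          le_csSup hbbS ⟨F, hF, hω, rfl⟩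
        have hSOS : steeringFraction σS F - 1 ≤ SO σS := by
          have := hfree σS; linarith
        have h2 : steeringValue F σS ≤ (SO σS + 1) * steeringBound F := by
          have h3 : steeringValue F σS / steeringBound F ≤ SO σS + 1 := by
            rw [steeringFraction] at hSOS; linarith
          exact (div_le_iff₀ hω).mp h3
        have hdecv : steeringValue F σ
            = (1 - SW σ) * steeringValue F σUS + SW σ * steeringValue F σS :=
          steeringValue_decomp hdec
        rw [steeringFraction, div_le_iff₀ hω, hdecv]
        have hmul1 : SW σ * steeringValue F σS ≤ SW σ * ((SO σS + 1) * steeringBound F) :=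
          mul_le_mul_of_nonneg_left h2 hν0
        have hmul2 : (1 - SW σ) * steeringValue F σUS ≤ (1 - SW σ) * steeringBound F :=
          mul_le_mul_of_nonneg_left hvUS (by linarith)
        nlinarith [hmul1, hmul2]
      · have hz : supFrac σ = 0 := by
          rw [supFrac, Set.not_nonempty_iff_eq_empty.mp hne, Real.sSup_empty]
        rw [hz]
        have := mul_nonneg hν0 hSOσS
        linarith
    have goal1 : SO σ ≤ SW σ * SO σS :=
      max_le (mul_nonneg hν0 hSOσS) (by linarith)
    -- second inequality
    have key : ∀ F : A → X → HMat ι, IsSteeringFunctional F → 0 < steeringBound F →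
        SW σ * steeringFraction σS F ≤ SO σ + 1 := by
      intro F hF hω
      have hvUS0 : 0 ≤ steeringValue F σUS := steeringValue_nonneg hF hUS.1
      have hdecv : steeringValue F σ
          = (1 - SW σ) * steeringValue F σUS + SW σ * steeringValue F σS :=
        steeringValue_decomp hdec
      have hprod : 0 ≤ (1 - SW σ) * steeringValue F σUS :=
        mul_nonneg (by linarith) hvUS0
      have hνvS : SW σ * steeringValue F σS ≤ steeringValue F σ := by linarith
      have hΓ : steeringFraction σ F ≤ supFrac σ := le_csSup hbb ⟨F, hF, hω, rfl⟩
      have hvσ : steeringValue F σ ≤ (SO σ + 1) * steeringBound F := by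
        have h3 : steeringValue F σ / steeringBound F ≤ SO σ + 1 := by
          rw [steeringFraction] at hΓ
          have := hfree σ; linarith
        exact (div_le_iff₀ hω).mp h3
      rw [steeringFraction, ← mul_div_assoc, div_le_iff₀ hω]
      linarith
    refine ⟨goal1, ?_⟩
    rcases le_or_gt (supFrac σS) 1 with h | h
    · have hz : SO σS = 0 := max_eq_left (by linarith)
      rw [hz, mul_zero]
      linarith
    · have hne : Set.Nonempty {r : ℝ | ∃ F : A → X → HMat ι, IsSteeringFunctional F ∧
          0 < steeringBound F ∧ r = steeringFraction σS F} := by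
        by_contra hc
        have : supFrac σS = 0 := by
          rw [supFrac, Set.not_nonempty_iff_eq_empty.mp hc, Real.sSup_empty]
        linarith
      have hSOeq : SO σS = supFrac σS - 1 := max_eq_right (by linarith)
      rcases eq_or_lt_of_le hν0 with hzz | hpos
      · rw [← hzz]
        simp only [zero_mul, sub_zero, mul_one]
        linarith
      · have hsup : SW σ * supFrac σS ≤ SO σ + 1 := by
          have hle : supFrac σS ≤ (SO σ + 1) / SW σ := by
            rw [supFrac]
            refine csSup_le hne ?_
            rintro r ⟨F, hF, hω, rfl⟩
            rw [le_div_iff₀ hpos]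
            have := key F hF hω
            linarith [mul_comm (steeringFraction σS F) (SW σ)]
          calc SW σ * supFrac σS ≤ SW σ * ((SO σ + 1) / SW σ) :=
                mul_le_mul_of_nonneg_left hle hν0
            _ = SO σ + 1 := mul_div_cancel₀ _ (ne_of_gt hpos)
        rw [hSOeq, mul_sub, mul_one]
        linarith
  · have hIsE : IsEmpty X := not_nonempty_iff.mp hX
    have hQ : ∀ τ : A → X → HMat ι, SO τ = 0 := by
      intro τ
      have hset : {r : ℝ | ∃ F : A → X → HMat ι, IsSteeringFunctional F ∧
          0 < steeringBound F ∧ r = steeringFraction τ F} = ∅ := by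
        ext r
        simp only [Set.mem_setOf_eq, Set.mem_empty_iff_false, iff_false, not_exists]
        intro F
        rintro ⟨-, hω, -⟩
        have hb : steeringBound F ≤ 0 := by
          rw [steeringBound]
          refine Real.sSup_le ?_ le_rfl
          rintro s ⟨τ', -, -, rfl⟩
          rw [steeringValue]
          simp [Finset.univ_eq_empty]
        linarith
      rw [SO, supFrac, hset, Real.sSup_empty]
      norm_num
    rw [hQ σ, hQ σS, mul_zero]
    constructor
    · linarith
    · linarith

end QSteer

end
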